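/- There is a model category structure on the category rPres of reflexive presentations in which the weak equivalences are the morphisms f : P → Q such that ⟦f⟧ : ⟦P⟧ → ⟦Q⟧ is an isomorphism of presented monoids, the cofibrations are llp(rlp(I)), and the fibrations are the morphisms with the right lifting property with respect to all trivial cofibrations (cofibrations that are weak equivalences). -/

import Mathlib

/-- A presentation of a monoid: a type of generators and a set of relations
between words (elements of the free monoid) over the generators. -/
structure MonPres : Type 1 where
  gen : Type
  rel : Set (FreeMonoid gen × FreeMonoid gen)

namespace MonPres

/-- The congruence on the free monoid generated by the relations. -/
def con (P : MonPres) : Con (FreeMonoid P.gen) :=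
  conGen fun u v => (u, v) ∈ P.rel

/-- The monoid presented by a presentation. -/
abbrev Presented (P : MonPres) : Type := P.con.Quotient

end MonPres

/-- A morphism of presentations. -/
structure MonPresHom (P Q : MonPres) where
  toFun : P.gen → Q.gen
  map_rel : ∀ p ∈ P.rel,
    (FreeMonoid.map toFun p.1, FreeMonoid.map toFun p.2) ∈ Q.rel

namespace MonPresHom

/-- The monoid homomorphism induced on presented monoids. -/
def induced {P Q : MonPres} (f : MonPresHom P Q) : P.Presented →* Q.Presented :=
  Con.lift P.con ((Con.mk' Q.con).comp (FreeMonoid.map f.toFun)) (by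
    refine Con.conGen_le.mpr ?_
    intro x y hxy
    simp only [Con.ker_rel, MonoidHom.comp_apply, Con.coe_mk']
    exact (Con.eq _).mpr (ConGen.Rel.of _ _ (f.map_rel (x, y) hxy)))

/-- Identity morphism of presentations. -/
def id (P : MonPres) : MonPresHom P P where
  toFun := _root_.id
  map_rel := by intro p hp; simpa using hp

/-- Composition of morphisms of presentations. -/
def comp {P Q R : MonPres} (g : MonPresHom Q R) (f : MonPresHom P Q) :
    MonPresHom P R where
  toFun := g.toFun ∘ f.toFun
  map_rel := by
    intro p hp
    have h := g.map_rel _ (f.map_rel p hp)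
    simpa [FreeMonoid.map_comp] using h

end MonPresHom

/-- The standard presentation of a monoid `M`: generators are the elements of
`M`, and relations are all pairs of words whose products in `M` coincide. -/
def stdPres (M : Type) [Monoid M] : MonPres where
  gen := M
  rel := {p | FreeMonoid.lift (id : M → M) p.1 = FreeMonoid.lift (id : M → M) p.2}
open CategoryTheory

/-- A reflexive presentation: every word is related to itself. -/
structure RPres : Type 1 where
  pres : MonPres
  refl : ∀ u : FreeMonoid pres.gen, (u, u) ∈ pres.rel

/-- The category of reflexive presentations and morphisms of presentations. -/
instance : Category RPres where
  Hom P Q := MonPresHom P.pres Q.pres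
  id P := MonPresHom.id P.pres
  comp f g := g.comp f
  id_comp _ := rfl
  comp_id _ := rfl
  assoc _ _ _ := rfl

/-- The reflexive presentation on a type of generators with no relations
besides the reflexivity ones. -/
def rpresDiag (α : Type) : RPres :=
  ⟨⟨α, Set.diagonal _⟩, fun _ => rfl⟩

/-- The word `a₁ … a_m` in the free monoid on `Fin (m + n)`. -/
def leftWord (m n : ℕ) : FreeMonoid (Fin (m + n)) :=
  FreeMonoid.ofList (List.ofFn fun i : Fin m => Fin.castAdd n i)

/-- The word `a_{m+1} … a_{m+n}` in the free monoid on `Fin (m + n)`. -/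
def rightWord (m n : ℕ) : FreeMonoid (Fin (m + n)) :=
  FreeMonoid.ofList (List.ofFn fun i : Fin n => Fin.natAdd m i)

/-- The reflexive presentation on `m + n` generators with one extra relation
`a₁ … a_m → a_{m+1} … a_{m+n}`. -/
def rpresRel (m n : ℕ) : RPres :=
  ⟨⟨Fin (m + n), insert (leftWord m n, rightWord m n) (Set.diagonal _)⟩,
    fun _ => Set.mem_insert_iff.mpr (Or.inr rfl)⟩

/-- The generating cofibration `∅ → ⟨a | ⟩`. -/
def iGen : rpresDiag Empty ⟶ rpresDiag PUnit where
  toFun := fun x => x.elim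
  map_rel := by rintro ⟨u, v⟩ (h : u = v); subst h; exact rfl

/-- The generating cofibration `⟨a₁,…,a_{m+n} | ⟩ → R^{m,n}`. -/
def iRel (m n : ℕ) : rpresDiag (Fin (m + n)) ⟶ rpresRel m n where
  toFun := _root_.id
  map_rel := by
    rintro ⟨u, v⟩ (h : u = v); subst h
    exact Set.mem_insert_iff.mpr (Or.inr rfl)

/-- The class `I` of generating cofibrations. -/
inductive IClass : ∀ ⦃X Y : RPres⦄, (X ⟶ Y) → Prop
  | g : IClass iGen
  | r (m n : ℕ) : IClass (iRel m n)

/-- The class `rlp(I)` of trivial fibrations. -/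
def RlpI : MorphismProperty RPres := fun _ _ p =>
  ∀ ⦃A B : RPres⦄ (i : A ⟶ B), IClass i → HasLiftingProperty i p

/-- The class `llp(rlp(I))` of cofibrations. -/
def Cofib : MorphismProperty RPres := fun _ _ f =>
  ∀ ⦃X Y : RPres⦄ (p : X ⟶ Y), RlpI p → HasLiftingProperty f p

/-- The weak equivalences: morphisms inducing an isomorphism of presented
monoids. -/
def Weq : MorphismProperty RPres := fun _ _ f =>
  Function.Bijective (MonPresHom.induced f)

/-- The fibrations: morphisms with the right lifting property with respect to
all trivial cofibrations. -/
def Fib : MorphismProperty RPres := fun _ _ p =>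
  ∀ ⦃A B : RPres⦄ (i : A ⟶ B), Cofib i → Weq i → HasLiftingProperty i p

/-- A weak factorization system: the two classes determine each other by
lifting properties, and every morphism factors accordingly. -/
structure IsWFS (L R : MorphismProperty RPres) : Prop where
  lift : ∀ ⦃A B X Y : RPres⦄ (i : A ⟶ B) (p : X ⟶ Y), L i → R p →
    HasLiftingProperty i p
  llp : ∀ ⦃A B : RPres⦄ (i : A ⟶ B),
    (∀ ⦃X Y : RPres⦄ (p : X ⟶ Y), R p → HasLiftingProperty i p) → L i
  rlp : ∀ ⦃X Y : RPres⦄ (p : X ⟶ Y),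
    (∀ ⦃A B : RPres⦄ (i : A ⟶ B), L i → HasLiftingProperty i p) → R p
  factor : ∀ ⦃X Y : RPres⦄ (f : X ⟶ Y),
    ∃ (Z : RPres) (i : X ⟶ Z) (p : Z ⟶ Y), L i ∧ R p ∧ i ≫ p = f


section ModelAux
open CategoryTheory

theorem MonPresHom.ext' {P Q : MonPres} {f g : MonPresHom P Q}
    (h : f.toFun = g.toFun) : f = g := by
  cases f; cases g; cases h; rfl

@[simp] lemma rp_comp_toFun {X Y Z : RPres} (f : X ⟶ Y) (g : Y ⟶ Z) :
    (f ≫ g).toFun = g.toFun ∘ f.toFun := rfl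

@[simp] lemma rp_id_toFun {X : RPres} : (𝟙 X : X ⟶ X).toFun = _root_.id := rfl

lemma presented_hom_ext {P : MonPres} {M : Type*} [Monoid M]
    {φ ψ : P.Presented →* M}
    (h : ∀ w : FreeMonoid P.gen, φ (Con.mk' P.con w) = ψ (Con.mk' P.con w)) :
    φ = ψ := by
  refine MonoidHom.ext fun ζ => ?_
  induction ζ using Con.induction_on with
  | H w => exact h w

lemma induced_mk' {P Q : MonPres} (f : MonPresHom P Q) (w : FreeMonoid P.gen) :
    f.induced (Con.mk' P.con w) = Con.mk' Q.con (FreeMonoid.map f.toFun w) := rfl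

lemma rpInduced_comp {X Y Z : RPres} (f : X ⟶ Y) (g : Y ⟶ Z) :
    MonPresHom.induced (f ≫ g)
      = (MonPresHom.induced g).comp (MonPresHom.induced f) := by
  apply presented_hom_ext
  intro w
  rw [MonoidHom.comp_apply, induced_mk', induced_mk', induced_mk']
  exact congrArg _ (by
    rw [show (f ≫ g).toFun = g.toFun ∘ f.toFun from rfl, FreeMonoid.map_comp]; rfl)

lemma rpInduced_id {X : RPres} :
    MonPresHom.induced (𝟙 X : X ⟶ X) = MonoidHom.id _ := by
  apply presented_hom_ext
  intro w
  rw [MonoidHom.id_apply, induced_mk']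
  exact congrArg _ (by
    rw [show (𝟙 X : X ⟶ X).toFun = _root_.id from rfl, FreeMonoid.map_id]; rfl)

/-- two-of-three, composition -/
lemma weq_comp {X Y Z : RPres} (f : X ⟶ Y) (g : Y ⟶ Z) :
    Weq f → Weq g → Weq (f ≫ g) := by
  intro hf hg
  unfold Weq
  rw [rpInduced_comp, MonoidHom.coe_comp]
  exact Function.Bijective.comp hg hf


lemma weq_cancel_left {X Y Z : RPres} (f : X ⟶ Y) (g : Y ⟶ Z) :
    Weq g → Weq (f ≫ g) → Weq f := by
  intro hg hfg
  unfold Weq at *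
  rw [rpInduced_comp, MonoidHom.coe_comp] at hfg
  constructor
  · intro a b hab
    exact hfg.injective (by simp [MonoidHom.comp_apply, hab])
  · intro b
    obtain ⟨a, ha⟩ := hfg.surjective (MonPresHom.induced g b)
    exact ⟨a, hg.injective ha⟩

lemma weq_cancel_right {X Y Z : RPres} (f : X ⟶ Y) (g : Y ⟶ Z) :
    Weq f → Weq (f ≫ g) → Weq g := by
  intro hf hfg
  unfold Weq at *
  rw [rpInduced_comp, MonoidHom.coe_comp] at hfg
  constructor
  · intro a b hab
    obtain ⟨a', rfl⟩ := hf.surjective a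
    obtain ⟨b', rfl⟩ := hf.surjective b
    exact congrArg _ (hfg.injective (by simpa [MonoidHom.comp_apply] using hab))
  · intro b
    obtain ⟨a, ha⟩ := hfg.surjective b
    exact ⟨_, ha⟩

/-- helper to build lifting properties -/
lemma hlp_of {A B X Y : RPres} (i : A ⟶ B) (p : X ⟶ Y)
    (H : ∀ (f : A ⟶ X) (g : B ⟶ Y), f ≫ p = i ≫ g →
      ∃ l : B ⟶ X, i ≫ l = f ∧ l ≫ p = g) :
    HasLiftingProperty i p := by
  constructor
  intro f g sq
  obtain ⟨l, h1, h2⟩ := H f g sq.w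
  exact ⟨⟨⟨l, h1, h2⟩⟩⟩

lemma hlp_lift {A B X Y : RPres} {i : A ⟶ B} {p : X ⟶ Y}
    (h : HasLiftingProperty i p) (f : A ⟶ X) (g : B ⟶ Y)
    (w : f ≫ p = i ≫ g) : ∃ l : B ⟶ X, i ≫ l = f ∧ l ≫ p = g := by
  obtain ⟨⟨⟨l, h1, h2⟩⟩⟩ := h.sq_hasLift (CommSq.mk w)
  exact ⟨l, h1, h2⟩

/-- morphism from a diagonal presentation -/
def diagHom {α : Type} {P : RPres} (f : α → P.pres.gen) : rpresDiag α ⟶ P where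
  toFun := f
  map_rel := by rintro ⟨u, v⟩ (h : u = v); subst h; exact P.refl _

lemma diagHom_ext {α : Type} {P : RPres} {f g : rpresDiag α ⟶ P}
    (h : ∀ a : α, f.toFun a = g.toFun a) : f = g :=
  MonPresHom.ext' (funext h)

/-- surjective on generators and reflects relations -/
def SurjRefl {X Y : RPres} (p : X ⟶ Y) : Prop :=
  Function.Surjective p.toFun ∧
  ∀ u v : FreeMonoid X.pres.gen,
    (FreeMonoid.map p.toFun u, FreeMonoid.map p.toFun v) ∈ Y.pres.rel →
      (u, v) ∈ X.pres.rel

end ModelAux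
section RlpIChar
open CategoryTheory

lemma rlpI_of_surjRefl {X Y : RPres} (p : X ⟶ Y) (hp : SurjRefl p) : RlpI p := by
  intro A B i hi
  cases hi with
  | g =>
    apply hlp_of
    intro f g w
    refine ⟨diagHom (fun _ => (hp.1 (g.toFun PUnit.unit)).choose), ?_, ?_⟩
    · exact diagHom_ext (fun a => a.elim)
    · apply diagHom_ext
      intro a
      have := (hp.1 (g.toFun PUnit.unit)).choose_spec
      cases a
      exact this
  | r m n =>
    apply hlp_of
    intro f g w
    have hw : p.toFun ∘ f.toFun = g.toFun := by
      have h := congrArg MonPresHom.toFun w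
      exact h
    refine ⟨⟨f.toFun, ?_⟩, ?_, ?_⟩
    · rintro ⟨u, v⟩ hr
      rcases Set.mem_insert_iff.mp hr with heq | hdiag
      · obtain ⟨rfl, rfl⟩ : u = leftWord m n ∧ v = rightWord m n :=
          ⟨congrArg Prod.fst heq, congrArg Prod.snd heq⟩
        apply hp.2
        have hg := g.map_rel (leftWord m n, rightWord m n) (Set.mem_insert _ _)
        have hc : ∀ w, FreeMonoid.map p.toFun (FreeMonoid.map f.toFun w)
            = FreeMonoid.map g.toFun w := fun w => by
          rw [← hw]; exact (DFunLike.congr_fun (FreeMonoid.map_comp p.toFun f.toFun) w).symm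
        show (FreeMonoid.map p.toFun (FreeMonoid.map f.toFun (leftWord m n)),
          FreeMonoid.map p.toFun (FreeMonoid.map f.toFun (rightWord m n))) ∈ Y.pres.rel
        convert hg using 2 <;> exact hc _
      · have : u = v := hdiag
        subst this
        exact X.refl _
    · exact MonPresHom.ext' rfl
    · exact MonPresHom.ext' hw

lemma rlpI_surj {X Y : RPres} (p : X ⟶ Y) (h : RlpI p) :
    Function.Surjective p.toFun := by
  intro y
  obtain ⟨l, _, h2⟩ := hlp_lift (h iGen IClass.g)
    (diagHom (fun e => e.elim)) (diagHom (fun _ => y))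
    (diagHom_ext (fun a => a.elim))
  refine ⟨l.toFun PUnit.unit, ?_⟩
  exact congrFun (congrArg MonPresHom.toFun h2) PUnit.unit

lemma rlpI_refl {X Y : RPres} (p : X ⟶ Y) (h : RlpI p) :
    ∀ u v : FreeMonoid X.pres.gen,
      (FreeMonoid.map p.toFun u, FreeMonoid.map p.toFun v) ∈ Y.pres.rel →
        (u, v) ∈ X.pres.rel := by
  intro u v huv
  classical
  set lu := FreeMonoid.toList u with hlu
  set lv := FreeMonoid.toList v with hlv
  set m := lu.length with hm
  set n := lv.length with hn
  set gfun : Fin (m + n) → X.pres.gen := (fun k =>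
    if hk : (k : ℕ) < m then lu[(k : ℕ)]'hk
    else lv[(k : ℕ) - m]'(by omega)) with hgfun
  have hleft : FreeMonoid.map gfun (leftWord m n) = u := by
    apply FreeMonoid.toList.injective
    rw [FreeMonoid.toList_map]
    show (List.ofFn fun i : Fin m => Fin.castAdd n i).map gfun = lu
    rw [List.map_ofFn]
    have he : (gfun ∘ Fin.castAdd n) = fun i : Fin m => lu[(i : ℕ)] := by
      funext i
      show gfun (Fin.castAdd n i) = _
      rw [hgfun]
      have h1 : ((Fin.castAdd n i : Fin (m + n)) : ℕ) = (i : ℕ) := rfl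
      simp only [h1, i.isLt, dif_pos]
    rw [he, List.ofFn_getElem]
  have hright : FreeMonoid.map gfun (rightWord m n) = v := by
    apply FreeMonoid.toList.injective
    rw [FreeMonoid.toList_map]
    show (List.ofFn fun i : Fin n => Fin.natAdd m i).map gfun = lv
    rw [List.map_ofFn]
    have he : (gfun ∘ Fin.natAdd m) = fun i : Fin n => lv[(i : ℕ)] := by
      funext i
      show gfun (Fin.natAdd m i) = _
      rw [hgfun]
      have h1 : ((Fin.natAdd m i : Fin (m + n)) : ℕ) = m + (i : ℕ) := rfl
      have h2 : ¬ (m + (i : ℕ) < m) := by omega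
      simp only [h1, h2, dif_neg, not_false_iff]
      have h3 : m + (i : ℕ) - m = (i : ℕ) := by omega
      simp only [h3]
    rw [he, List.ofFn_getElem]
  let gbot : rpresRel m n ⟶ Y := ⟨p.toFun ∘ gfun, by
    rintro ⟨a, b⟩ hab
    rcases Set.mem_insert_iff.mp hab with heq | hdiag
    · obtain ⟨rfl, rfl⟩ : a = leftWord m n ∧ b = rightWord m n :=
        ⟨congrArg Prod.fst heq, congrArg Prod.snd heq⟩
      show (FreeMonoid.map (p.toFun ∘ gfun) (leftWord m n),
        FreeMonoid.map (p.toFun ∘ gfun) (rightWord m n)) ∈ Y.pres.rel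
      rw [FreeMonoid.map_comp, MonoidHom.comp_apply, MonoidHom.comp_apply,
        hleft, hright]
      exact huv
    · have : a = b := hdiag
      subst this
      exact Y.refl _⟩
  obtain ⟨l, h1, h2⟩ := hlp_lift (h (iRel m n) (IClass.r m n))
    (diagHom gfun) gbot (MonPresHom.ext' rfl)
  have hl : l.toFun = gfun := by
    have h3 := congrArg MonPresHom.toFun h1
    exact h3
  have hrel := l.map_rel (leftWord m n, rightWord m n) (Set.mem_insert _ _)
  rw [hl] at hrel
  simp only [] at hrel
  rw [← hleft, ← hright]
  exact hrel

lemma surjRefl_weq {X Y : RPres} (p : X ⟶ Y) (hp : SurjRefl p) : Weq p := by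
  obtain ⟨hsurj, hr⟩ := hp
  choose s hs' using hsurj
  have hps : p.toFun ∘ s = _root_.id := funext hs'
  have hmap : ∀ w : FreeMonoid Y.pres.gen,
      FreeMonoid.map p.toFun (FreeMonoid.map s w) = w := by
    intro w
    rw [← MonoidHom.comp_apply, ← FreeMonoid.map_comp, hps, FreeMonoid.map_id]
    rfl
  let σ : Y ⟶ X := ⟨s, by
    rintro ⟨u, v⟩ huv
    apply hr
    rw [hmap, hmap]
    exact huv⟩
  show Function.Bijective (MonPresHom.induced p)
  apply Function.bijective_iff_has_inverse.mpr
  refine ⟨MonPresHom.induced σ, ?_, ?_⟩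
  · intro ζ
    induction ζ using Con.induction_on with
    | H w =>
      show (MonPresHom.induced σ) ((MonPresHom.induced p) (Con.mk' _ w))
        = Con.mk' _ w
      rw [induced_mk', induced_mk']
      apply (Con.eq _).mpr
      induction w using FreeMonoid.recOn with
      | one => simp only [map_one]; exact (X.pres.con).refl _
      | of_mul x w ih =>
        simp only [map_mul, FreeMonoid.map_of]
        refine (X.pres.con).mul ?_ ih
        refine ConGen.Rel.of _ _ ?_
        apply hr
        show (FreeMonoid.map p.toFun (FreeMonoid.of (s (p.toFun x))),
          FreeMonoid.map p.toFun (FreeMonoid.of x)) ∈ Y.pres.rel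
        rw [FreeMonoid.map_of, FreeMonoid.map_of, hs']
        exact Y.refl _
  · intro ζ
    induction ζ using Con.induction_on with
    | H w =>
      show (MonPresHom.induced p) ((MonPresHom.induced σ) (Con.mk' _ w))
        = Con.mk' _ w
      rw [induced_mk', induced_mk']
      exact congrArg _ (hmap w)

end RlpIChar
section CofibChunk
open CategoryTheory

lemma cofib_of_inj {A B : RPres} (i : A ⟶ B)
    (hi : Function.Injective i.toFun) : Cofib i := by
  intro X Y p hp
  have hsurj := rlpI_surj p hp
  have hrefl := rlpI_refl p hp
  apply hlp_of
  intro f g w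
  classical
  have hw : p.toFun ∘ f.toFun = g.toFun ∘ i.toFun := congrArg MonPresHom.toFun w
  let lf : B.pres.gen → X.pres.gen := fun b =>
    if h : ∃ a, i.toFun a = b then f.toFun h.choose
    else (hsurj (g.toFun b)).choose
  have hpl : ∀ b, p.toFun (lf b) = g.toFun b := by
    intro b
    by_cases h : ∃ a, i.toFun a = b
    · simp only [lf, dif_pos h]
      have := congrFun hw h.choose
      simp only [Function.comp_apply] at this
      rw [this, h.choose_spec]
    · simp only [lf, dif_neg h]
      exact (hsurj (g.toFun b)).choose_spec
  have hmapl : ∀ u : FreeMonoid B.pres.gen,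
      FreeMonoid.map p.toFun (FreeMonoid.map lf u) = FreeMonoid.map g.toFun u := by
    intro u
    rw [← MonoidHom.comp_apply, ← FreeMonoid.map_comp]
    exact congrFun (congrArg (fun h => ⇑(FreeMonoid.map h)) (funext hpl)) u
  refine ⟨⟨lf, ?_⟩, ?_, ?_⟩
  · rintro ⟨u, v⟩ huv
    apply hrefl
    rw [hmapl, hmapl]
    exact g.map_rel (u, v) huv
  · apply MonPresHom.ext'
    funext a
    show lf (i.toFun a) = f.toFun a
    have h : ∃ a', i.toFun a' = i.toFun a := ⟨a, rfl⟩
    simp only [lf, dif_pos h]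
    exact congrArg f.toFun (hi h.choose_spec)
  · exact MonPresHom.ext' (funext hpl)

/-- the chaotic (codiscrete) reflexive presentation -/
def rpresChaotic (α : Type) : RPres := ⟨⟨α, Set.univ⟩, fun _ => trivial⟩

lemma inj_of_cofib {A B : RPres} (i : A ⟶ B) (hc : Cofib i) :
    Function.Injective i.toFun := by
  intro a b hab
  let p : rpresChaotic A.pres.gen ⟶ rpresChaotic PUnit :=
    ⟨fun _ => PUnit.unit, fun _ _ => trivial⟩
  have hp : RlpI p :=
    rlpI_of_surjRefl p ⟨fun y => ⟨a, @Subsingleton.elim PUnit _ _ _⟩, fun _ _ _ => trivial⟩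
  obtain ⟨l, h1, _⟩ := hlp_lift (hc p hp)
    (⟨_root_.id, fun _ _ => trivial⟩ : A ⟶ rpresChaotic A.pres.gen)
    (⟨fun _ => PUnit.unit, fun _ _ => trivial⟩ : B ⟶ rpresChaotic PUnit)
    (MonPresHom.ext' rfl)
  have h2 := congrArg MonPresHom.toFun h1
  exact (congrFun h2 a).symm.trans ((congrArg l.toFun hab).trans (congrFun h2 b))

lemma iclass_cofib {A B : RPres} (i : A ⟶ B) (h : IClass i) : Cofib i := by
  cases h with
  | g => exact cofib_of_inj _ (fun a => a.elim)
  | r m n => exact cofib_of_inj _ (fun a b hab => hab)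

lemma rlpI_of_dominated {X Y Z : RPres} (p : X ⟶ Y) (i' : X ⟶ Z) (q' : Z ⟶ Y)
    (l : Z ⟶ X) (h1 : i' ≫ l = 𝟙 X) (h2 : l ≫ p = q') (h3 : i' ≫ q' = p)
    (hq : RlpI q') : RlpI p := by
  intro A B iAB hI
  apply hlp_of
  intro s t w
  have w2 : (s ≫ i') ≫ q' = iAB ≫ t := by
    rw [Category.assoc, h3]
    exact w
  obtain ⟨L, hL1, hL2⟩ := hlp_lift (hq iAB hI) (s ≫ i') t w2
  refine ⟨L ≫ l, ?_, ?_⟩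
  · rw [← Category.assoc, hL1, Category.assoc, h1, Category.comp_id]
  · rw [Category.assoc, h2, hL2]

/-- The mapping-cylinder-style factorization for the first WFS. -/
def fact1Mid {X Y : RPres} (f : X ⟶ Y) : RPres :=
  ⟨⟨X.pres.gen ⊕ Y.pres.gen,
    {uv | (FreeMonoid.map (Sum.elim f.toFun _root_.id) uv.1,
           FreeMonoid.map (Sum.elim f.toFun _root_.id) uv.2) ∈ Y.pres.rel}⟩,
   fun u => Y.refl _⟩

def fact1i {X Y : RPres} (f : X ⟶ Y) : X ⟶ fact1Mid f where
  toFun := Sum.inl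
  map_rel := by
    rintro ⟨u, v⟩ huv
    show (FreeMonoid.map _ (FreeMonoid.map Sum.inl u),
      FreeMonoid.map _ (FreeMonoid.map Sum.inl v)) ∈ Y.pres.rel
    rw [← MonoidHom.comp_apply, ← MonoidHom.comp_apply, ← FreeMonoid.map_comp]
    have : (Sum.elim f.toFun (_root_.id : Y.pres.gen → Y.pres.gen)) ∘ Sum.inl
        = f.toFun := rfl
    rw [this]
    exact f.map_rel (u, v) huv

def fact1q {X Y : RPres} (f : X ⟶ Y) : fact1Mid f ⟶ Y where
  toFun := Sum.elim f.toFun _root_.id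
  map_rel := fun uv h => h

lemma fact1_comp {X Y : RPres} (f : X ⟶ Y) : fact1i f ≫ fact1q f = f :=
  MonPresHom.ext' rfl

lemma fact1q_surjRefl {X Y : RPres} (f : X ⟶ Y) : SurjRefl (fact1q f) :=
  ⟨fun y => ⟨Sum.inr y, rfl⟩, fun u v h => h⟩

lemma fact1i_inj {X Y : RPres} (f : X ⟶ Y) :
    Function.Injective (fact1i f).toFun := fun _ _ h => Sum.inl_injective h

lemma fibweq_rlpI {X Y : RPres} (p : X ⟶ Y) (hf : Fib p) (hw : Weq p) :
    RlpI p := by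
  have hq : RlpI (fact1q p) := rlpI_of_surjRefl _ (fact1q_surjRefl p)
  have wq : Weq (fact1q p) := surjRefl_weq _ (fact1q_surjRefl p)
  have wi : Weq (fact1i p) := by
    apply weq_cancel_left (fact1i p) (fact1q p) wq
    rw [fact1_comp]
    exact hw
  have ci : Cofib (fact1i p) := cofib_of_inj _ (fact1i_inj p)
  have hlift : HasLiftingProperty (fact1i p) p := hf (fact1i p) ci wi
  obtain ⟨l, h1, h2⟩ := hlp_lift hlift (𝟙 X) (fact1q p)
    (by rw [Category.id_comp, fact1_comp])
  exact rlpI_of_dominated p (fact1i p) (fact1q p) l h1 h2 (fact1_comp p) hq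

end CofibChunk
section LimitsChunk
open CategoryTheory CategoryTheory.Limits

variable {J : Type} [SmallCategory J]

namespace RPresLim

variable (F : J ⥤ RPres)

def limGen : Type :=
  {s : ∀ j : J, (F.obj j).pres.gen //
    ∀ {j j' : J} (φ : j ⟶ j'), (F.map φ).toFun (s j) = s j'}

def proj (j : J) : limGen F → (F.obj j).pres.gen := fun s => s.1 j

def limP : RPres :=
  ⟨⟨limGen F,
    {uv | ∀ j : J, (FreeMonoid.map (proj F j) uv.1,
      FreeMonoid.map (proj F j) uv.2) ∈ (F.obj j).pres.rel}⟩,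
   fun _ j => (F.obj j).refl _⟩

def limπ (j : J) : limP F ⟶ F.obj j :=
  ⟨proj F j, fun _ h => h j⟩

def limCone : Cone F where
  pt := limP F
  π :=
    { app := limπ F
      naturality := by
        intro j j' φ
        apply MonPresHom.ext'
        funext s
        exact (s.2 φ).symm }

def liftFun (s : Cone F) : s.pt.pres.gen → limGen F := fun x =>
  ⟨fun j => (s.π.app j).toFun x, by
    intro j j' φ
    have h2 := congrFun (congrArg MonPresHom.toFun (s.π.naturality φ)) x
    exact h2.symm⟩

def limIsLimit : IsLimit (limCone F) where
  lift s :=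
    { toFun := liftFun F s
      map_rel := by
        rintro ⟨u, v⟩ huv j
        show (FreeMonoid.map (proj F j) (FreeMonoid.map (liftFun F s) u),
          FreeMonoid.map (proj F j) (FreeMonoid.map (liftFun F s) v))
          ∈ (F.obj j).pres.rel
        have heq : ∀ w : FreeMonoid s.pt.pres.gen,
            FreeMonoid.map (proj F j) (FreeMonoid.map (liftFun F s) w)
            = FreeMonoid.map ((s.π.app j).toFun) w := by
          intro w
          rw [← MonoidHom.comp_apply, ← FreeMonoid.map_comp]
          rfl
        rw [heq, heq]
        exact (s.π.app j).map_rel (u, v) huv }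
  fac s j := MonPresHom.ext' rfl
  uniq s m hm := by
    apply MonPresHom.ext'
    funext x
    apply Subtype.ext
    funext j
    exact congrFun (congrArg MonPresHom.toFun (hm j)) x

end RPresLim

instance : HasLimits RPres where
  has_limits_of_shape J _ :=
    { has_limit := fun F => HasLimit.mk ⟨RPresLim.limCone F, RPresLim.limIsLimit F⟩ }

namespace RPresColim

/-- the generators functor -/
def genF : RPres ⥤ Type where
  obj P := P.pres.gen
  map f := TypeCat.ofHom f.toFun
  map_id _ := rfl
  map_comp _ _ := rfl

variable (F : J ⥤ RPres)

noncomputable def colimGen : Type := colimit (F ⋙ genF)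

noncomputable def inc (j : J) : (F.obj j).pres.gen → colimGen F :=
  fun x => (colimit.ι (F ⋙ genF) j) x

noncomputable def colimP : RPres :=
  ⟨⟨colimGen F,
    {uv | uv.1 = uv.2 ∨ ∃ (j : J) (u v : FreeMonoid (F.obj j).pres.gen),
      (u, v) ∈ (F.obj j).pres.rel ∧
      FreeMonoid.map (inc F j) u = uv.1 ∧ FreeMonoid.map (inc F j) v = uv.2}⟩,
   fun _ => Or.inl rfl⟩

noncomputable def colimι (j : J) : F.obj j ⟶ colimP F :=
  ⟨inc F j, fun uv h => Or.inr ⟨j, uv.1, uv.2, h, rfl, rfl⟩⟩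

noncomputable def colimCocone : Cocone F where
  pt := colimP F
  ι :=
    { app := colimι F
      naturality := by
        intro j j' φ
        apply MonPresHom.ext'
        funext x
        exact congrArg (fun (h : (F ⋙ genF).obj j ⟶ colimit (F ⋙ genF)) => h x)
          (colimit.w (F ⋙ genF) φ) }

noncomputable def descFun (s : Cocone F) : colimGen F → s.pt.pres.gen :=
  fun x => (colimit.desc (F ⋙ genF) (genF.mapCocone s)) x

lemma descFun_inc (s : Cocone F) (j : J) :
    descFun F s ∘ inc F j = (s.ι.app j).toFun :=
  funext fun x => congrArg (fun (h : (F ⋙ genF).obj j ⟶ (genF.mapCocone s).pt) => h x) (colimit.ι_desc (genF.mapCocone s) j)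

noncomputable def colimIsColimit : IsColimit (colimCocone F) where
  desc s :=
    { toFun := descFun F s
      map_rel := by
        rintro ⟨u, v⟩ (heq | ⟨j, u', v', h, hu, hv⟩)
        · have h2 : u = v := heq
          subst h2
          exact s.pt.refl _
        · subst hu; subst hv
          show (FreeMonoid.map (descFun F s) (FreeMonoid.map (inc F j) u'),
            FreeMonoid.map (descFun F s) (FreeMonoid.map (inc F j) v'))
            ∈ s.pt.pres.rel
          have heq2 : ∀ w : FreeMonoid (F.obj j).pres.gen,
              FreeMonoid.map (descFun F s) (FreeMonoid.map (inc F j) w)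
              = FreeMonoid.map ((s.ι.app j).toFun) w := by
            intro w
            rw [← MonoidHom.comp_apply, ← FreeMonoid.map_comp, descFun_inc]
          rw [heq2, heq2]
          exact (s.ι.app j).map_rel (u', v') h }
  fac s j := MonPresHom.ext' (descFun_inc F s j)
  uniq s m hm := by
    apply MonPresHom.ext'
    funext x
    obtain ⟨j, y, hy⟩ := Types.jointly_surjective' (F := F ⋙ genF) x
    subst hy
    have h1 := congrFun (congrArg MonPresHom.toFun (hm j)) y
    have h2 := congrFun (descFun_inc F s j) y
    exact h1.trans h2.symm

end RPresColim

noncomputable instance : HasColimits RPres where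
  has_colimits_of_shape J _ :=
    { has_colimit := fun F =>
        HasColimit.mk ⟨RPresColim.colimCocone F, RPresColim.colimIsColimit F⟩ }

end LimitsChunk
section Fact2
open CategoryTheory

namespace Fact2

variable {X Y : RPres} (f : X ⟶ Y)

/-- index type for possible new generators: a generator of `Y` together with
an element of the monoid presented by `X` -/
abbrev Gn (X Y : RPres) : Type := Y.pres.gen × X.pres.Presented

abbrev mkX (X : RPres) : FreeMonoid X.pres.gen →* X.pres.Presented :=
  Con.mk' X.pres.con

/-- ambient generators -/
abbrev AmbG (X Y : RPres) : Type := X.pres.gen ⊕ Gn X Y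

abbrev Amb (X Y : RPres) : Type := FreeMonoid (AmbG X Y)

def θg : AmbG X Y → X.pres.Presented :=
  Sum.elim (fun x => mkX X (FreeMonoid.of x)) Prod.snd

def θh : Amb X Y →* X.pres.Presented := FreeMonoid.lift (θg (X := X) (Y := Y))

def qg : AmbG X Y → Y.pres.gen := Sum.elim f.toFun Prod.fst

def qh : Amb X Y →* FreeMonoid Y.pres.gen := FreeMonoid.map (qg f)

def eX : FreeMonoid X.pres.gen →* Amb X Y := FreeMonoid.map Sum.inl

def suppIn (S : Set (Gn X Y)) (u : Amb X Y) : Prop :=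
  ∀ g : Gn X Y, Sum.inr g ∈ FreeMonoid.toList u → g ∈ S

lemma suppIn_mono {S S' : Set (Gn X Y)} (h : S ⊆ S') {u : Amb X Y}
    (hu : suppIn S u) : suppIn S' u := fun g hg => h (hu g hg)

def relS (S : Set (Gn X Y)) : Amb X Y → Amb X Y → Prop := fun u v =>
  suppIn S u ∧ suppIn S v ∧ θh u = θh v ∧ (qh f u, qh f v) ∈ Y.pres.rel

def cgr (S : Set (Gn X Y)) : Con (Amb X Y) := conGen (relS f S)

lemma cgr_mono {S S' : Set (Gn X Y)} (h : S ⊆ S') : cgr f S ≤ cgr f S' := by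
  apply Con.conGen_le.mpr
  intro u v huv
  exact ConGen.Rel.of _ _ ⟨suppIn_mono h huv.1, suppIn_mono h huv.2.1,
    huv.2.2.1, huv.2.2.2⟩

lemma cgr_theta {S : Set (Gn X Y)} {u v : Amb X Y} (h : cgr f S u v) :
    θh u = θh v := by
  have hle : cgr f S ≤ Con.ker (θh (X := X) (Y := Y)) := by
    apply Con.conGen_le.mpr
    intro a b hab
    exact hab.2.2.1
  exact hle h

/-- the monotone operator whose least fixed point is the set of "good"
new generators -/
def Φ (S : Set (Gn X Y)) : Set (Gn X Y) :=
  {g | ∃ T : Set (Gn X Y), g ∈ T ∧ ∀ g' ∈ T, ∃ w : FreeMonoid X.pres.gen,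
    mkX X w = g'.2 ∧ cgr f (S ∪ T) (FreeMonoid.of (Sum.inr g')) (eX w)}

lemma Φ_mono : Monotone (Φ f) := by
  intro S S' hss g hg
  obtain ⟨T, hgT, hT⟩ := hg
  refine ⟨T, hgT, fun g' hg' => ?_⟩
  obtain ⟨w, hw, hchain⟩ := hT g' hg'
  exact ⟨w, hw, cgr_mono f (Set.union_subset_union_left T hss) hchain⟩

def K : Set (Gn X Y) := OrderHom.lfp ⟨Φ f, Φ_mono f⟩

lemma K_fixed : Φ f (K f) = K f := OrderHom.map_lfp ⟨Φ f, Φ_mono f⟩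

lemma mem_K_of_Φ {g : Gn X Y} (h : g ∈ Φ f (K f)) : g ∈ K f := by
  rw [K_fixed f] at h; exact h

lemma K_chain {g : Gn X Y} (hg : g ∈ K f) :
    ∃ w : FreeMonoid X.pres.gen, mkX X w = g.2 ∧
      cgr f (K f) (FreeMonoid.of (Sum.inr g)) (eX w) := by
  rw [← K_fixed f] at hg
  obtain ⟨T, hgT, hT⟩ := hg
  have hTK : T ⊆ K f := by
    intro g' hg'
    exact mem_K_of_Φ f ⟨T, hg', hT⟩
  obtain ⟨w, hw, hchain⟩ := hT g hgT
  rw [Set.union_eq_self_of_subset_right hTK] at hchain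
  exact ⟨w, hw, hchain⟩


/-- generators of the middle object -/
abbrev ZG (f : X ⟶ Y) : Type := X.pres.gen ⊕ {g : Gn X Y // g ∈ K f}

def θZg : ZG f → X.pres.Presented :=
  Sum.elim (fun x => mkX X (FreeMonoid.of x)) (fun g => g.1.2)

def θZh : FreeMonoid (ZG f) →* X.pres.Presented := FreeMonoid.lift (θZg f)

def qZg : ZG f → Y.pres.gen := Sum.elim f.toFun (fun g => g.1.1)

def qZh : FreeMonoid (ZG f) →* FreeMonoid Y.pres.gen := FreeMonoid.map (qZg f)

/-- the middle object of the factorization -/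
def Zmid : RPres :=
  ⟨⟨ZG f, {uv | θZh f uv.1 = θZh f uv.2 ∧ (qZh f uv.1, qZh f uv.2) ∈ Y.pres.rel}⟩,
    fun _ => ⟨rfl, Y.refl _⟩⟩

lemma θZ_inl (w : FreeMonoid X.pres.gen) :
    θZh f (FreeMonoid.map Sum.inl w) = mkX X w := by
  have h : (θZh f).comp (FreeMonoid.map Sum.inl) = mkX X :=
    FreeMonoid.hom_eq (fun x => rfl)
  exact congrFun (congrArg (fun (φ : _ →* _) => ⇑φ) h) w

lemma qZ_inl (w : FreeMonoid X.pres.gen) :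
    qZh f (FreeMonoid.map Sum.inl w) = FreeMonoid.map f.toFun w := by
  have h : (qZh f).comp (FreeMonoid.map Sum.inl) = FreeMonoid.map f.toFun :=
    FreeMonoid.hom_eq (fun x => rfl)
  exact congrFun (congrArg (fun (φ : _ →* _) => ⇑φ) h) w

def jZ : X ⟶ Zmid f where
  toFun := Sum.inl
  map_rel := by
    rintro ⟨u, v⟩ huv
    constructor
    · show θZh f (FreeMonoid.map Sum.inl u) = θZh f (FreeMonoid.map Sum.inl v)
      rw [θZ_inl, θZ_inl]
      exact (Con.eq _).mpr (ConGen.Rel.of _ _ huv)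
    · show (qZh f (FreeMonoid.map Sum.inl u), qZh f (FreeMonoid.map Sum.inl v))
        ∈ Y.pres.rel
      rw [qZ_inl, qZ_inl]
      exact f.map_rel (u, v) huv

def qZmor : Zmid f ⟶ Y := ⟨qZg f, fun _ h => h.2⟩

lemma fact2_comp : jZ f ≫ qZmor f = f := MonPresHom.ext' rfl

lemma jZ_inj : Function.Injective (jZ f).toFun := fun _ _ h => Sum.inl_injective h

/-- retraction from the ambient free monoid to words over `Z`'s generators,
sending junk generators to `1` (they never occur in supported words) -/
noncomputable def rZ : Amb X Y →* FreeMonoid (ZG f) :=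
  FreeMonoid.lift (fun a => match a with
    | Sum.inl x => FreeMonoid.of (Sum.inl x)
    | Sum.inr g =>
      haveI := Classical.propDecidable (g ∈ K f)
      if h : g ∈ K f then FreeMonoid.of (Sum.inr ⟨g, h⟩) else 1)

lemma rZ_inl (w : FreeMonoid X.pres.gen) :
    rZ f (eX w) = FreeMonoid.map Sum.inl w := by
  have h : (rZ f).comp (eX (X := X) (Y := Y)) = FreeMonoid.map Sum.inl :=
    FreeMonoid.hom_eq (fun x => rfl)
  exact congrFun (congrArg (fun (φ : _ →* _) => ⇑φ) h) w

lemma rZ_of_mem {g : Gn X Y} (h : g ∈ K f) :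
    rZ f (FreeMonoid.of (Sum.inr g)) = FreeMonoid.of (Sum.inr ⟨g, h⟩) := by
  classical
  show (if h' : g ∈ K f then FreeMonoid.of (Sum.inr (⟨g, h'⟩ : {g // g ∈ K f}))
    else 1) = _
  · rw [dif_pos h]

lemma θZ_rZ {u : Amb X Y} (hu : suppIn (K f) u) : θZh f (rZ f u) = θh u := by
  induction u using FreeMonoid.recOn with
  | one => simp only [map_one]
  | of_mul a u ih =>
    have hu1 : suppIn (K f) u := by
      intro g hg
      exact hu g (by
        rw [FreeMonoid.toList_of_mul]
        exact List.mem_cons_of_mem _ hg)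
    rw [map_mul, map_mul, map_mul, ih hu1]
    congr 1
    cases a with
    | inl x => rfl
    | inr g =>
      have hgK : g ∈ K f := hu g (by
        rw [FreeMonoid.toList_of_mul]
        exact List.mem_cons_self)
      rw [show (rZ f) (FreeMonoid.of (Sum.inr g))
        = FreeMonoid.of (Sum.inr ⟨g, hgK⟩) from rZ_of_mem f hgK]
      rfl

lemma qZ_rZ {u : Amb X Y} (hu : suppIn (K f) u) : qZh f (rZ f u) = qh f u := by
  induction u using FreeMonoid.recOn with
  | one => simp only [map_one]
  | of_mul a u ih =>
    have hu1 : suppIn (K f) u := by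
      intro g hg
      exact hu g (by
        rw [FreeMonoid.toList_of_mul]
        exact List.mem_cons_of_mem _ hg)
    rw [map_mul, map_mul, map_mul, ih hu1]
    congr 1
    cases a with
    | inl x => rfl
    | inr g =>
      have hgK : g ∈ K f := hu g (by
        rw [FreeMonoid.toList_of_mul]
        exact List.mem_cons_self)
      rw [show (rZ f) (FreeMonoid.of (Sum.inr g))
        = FreeMonoid.of (Sum.inr ⟨g, hgK⟩) from rZ_of_mem f hgK]
      rfl

/-- transfer congruence chains from the ambient monoid into `Zmid` -/
lemma cgr_to_Z {u v : Amb X Y} (h : cgr f (K f) u v) :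
    (Zmid f).pres.con (rZ f u) (rZ f v) := by
  let c : Con (Amb X Y) :=
    { r := fun u v => (Zmid f).pres.con (rZ f u) (rZ f v)
      iseqv := ⟨fun _ => ((Zmid f).pres.con).refl _,
        fun h => ((Zmid f).pres.con).symm h,
        fun h1 h2 => ((Zmid f).pres.con).trans h1 h2⟩
      mul' := by
        intro a b c' d h1 h2
        show (Zmid f).pres.con (rZ f (a * c')) (rZ f (b * d))
        rw [show rZ f (a * c') = rZ f a * rZ f c' from map_mul _ _ _,
          show rZ f (b * d) = rZ f b * rZ f d from map_mul _ _ _]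
        exact ((Zmid f).pres.con).mul h1 h2 }
  have hle : cgr f (K f) ≤ c := by
    apply Con.conGen_le.mpr
    rintro a b ⟨ha, hb, hθ, hq⟩
    refine ConGen.Rel.of _ _ ?_
    constructor
    · show θZh f (rZ f a) = θZh f (rZ f b)
      rw [θZ_rZ f ha, θZ_rZ f hb]
      exact hθ
    · show (qZh f (rZ f a), qZh f (rZ f b)) ∈ Y.pres.rel
      rw [qZ_rZ f ha, qZ_rZ f hb]
      exact hq
  exact hle h

/-- every new generator of `Zmid` is congruent to a word on old generators -/
lemma kill {g : Gn X Y} (hg : g ∈ K f) :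
    ∃ w : FreeMonoid X.pres.gen, mkX X w = g.2 ∧
      (Zmid f).pres.con (FreeMonoid.of (Sum.inr ⟨g, hg⟩))
        (FreeMonoid.map Sum.inl w) := by
  obtain ⟨w, hw, hchain⟩ := K_chain f hg
  refine ⟨w, hw, ?_⟩
  have h2 := cgr_to_Z f hchain
  rw [rZ_of_mem f hg, rZ_inl] at h2
  exact h2


def θhatZ : (Zmid f).pres.Presented →* X.pres.Presented :=
  Con.lift (Zmid f).pres.con (θZh f) (by
    apply Con.conGen_le.mpr
    intro u v huv
    exact huv.1)

lemma weq_jZ : Weq (jZ f) := by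
  have li : Function.LeftInverse (θhatZ f) (MonPresHom.induced (jZ f)) := by
    intro ζ
    induction ζ using Con.induction_on with
    | H w =>
      show θhatZ f ((MonPresHom.induced (jZ f)) (Con.mk' _ w)) = Con.mk' _ w
      rw [induced_mk']
      calc θhatZ f (Con.mk' (Zmid f).pres.con (FreeMonoid.map Sum.inl w))
          = θZh f (FreeMonoid.map Sum.inl w) := rfl
        _ = mkX X w := θZ_inl f w
  have hgen : ∀ z : ZG f, ∃ ξ, (MonPresHom.induced (jZ f)) ξ
      = Con.mk' (Zmid f).pres.con (FreeMonoid.of z) := by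
    intro z
    cases z with
    | inl x => exact ⟨Con.mk' X.pres.con (FreeMonoid.of x), rfl⟩
    | inr g =>
      obtain ⟨w, hw, hcon⟩ := kill f g.2
      refine ⟨Con.mk' X.pres.con w, ?_⟩
      rw [induced_mk']
      exact ((Con.eq _).mpr hcon).symm
  have hsurj : Function.Surjective (MonPresHom.induced (jZ f)) := by
    intro ζ
    induction ζ using Con.induction_on with
    | H w =>
      induction w using FreeMonoid.recOn with
      | one => exact ⟨1, map_one _⟩
      | of_mul z w ihw =>
        obtain ⟨ξ1, h1⟩ := hgen z
        obtain ⟨ξ2, h2⟩ := ihw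
        refine ⟨ξ1 * ξ2, ?_⟩
        rw [map_mul, h1, h2]
        rfl
  exact ⟨li.injective, hsurj⟩


lemma con_map_congr {α : Type} {M : Type*} [Monoid M] (c : Con M)
    (φ ψ : FreeMonoid α →* M)
    (h : ∀ a : α, c (φ (FreeMonoid.of a)) (ψ (FreeMonoid.of a))) :
    ∀ w : FreeMonoid α, c (φ w) (ψ w) := by
  intro w
  induction w using FreeMonoid.recOn with
  | one =>
    rw [show φ (1 : FreeMonoid α) = 1 from map_one φ,
      show ψ (1 : FreeMonoid α) = 1 from map_one ψ]
    exact c.refl 1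
  | of_mul a w ihw =>
    rw [show φ (FreeMonoid.of a * w) = φ (FreeMonoid.of a) * φ w from map_mul _ _ _,
      show ψ (FreeMonoid.of a * w) = ψ (FreeMonoid.of a) * ψ w from map_mul _ _ _]
    exact c.mul (h a) ihw

def embZg : ZG f → AmbG X Y := Sum.elim Sum.inl (fun s => Sum.inr s.1)

lemma θg_embZg (z : ZG f) : θg (embZg f z) = θZg f z := by cases z <;> rfl

lemma qg_embZg (z : ZG f) : qg f (embZg f z) = qZg f z := by cases z <;> rfl

lemma θ_eX (w : FreeMonoid X.pres.gen) :
    θh (eX (X := X) (Y := Y) w) = mkX X w := by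
  have h : (θh (X := X) (Y := Y)).comp (eX (X := X) (Y := Y)) = mkX X :=
    FreeMonoid.hom_eq (fun x => rfl)
  exact congrFun (congrArg (fun (φ : _ →* _) => ⇑φ) h) w

lemma suppIn_map {γ : Type} (φ : γ → AmbG X Y) (S : Set (Gn X Y))
    (h : ∀ c g, φ c = Sum.inr g → g ∈ S) (u : FreeMonoid γ) :
    suppIn S (FreeMonoid.map φ u) := by
  intro g hg
  rw [FreeMonoid.toList_map] at hg
  obtain ⟨c, _, hc⟩ := List.mem_map.mp hg
  exact h c g hc

lemma suppIn_of (S : Set (Gn X Y)) (l : AmbG X Y)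
    (h : ∀ g, l = Sum.inr g → g ∈ S) : suppIn S (FreeMonoid.of l) := by
  intro g hg
  rw [FreeMonoid.toList_of] at hg
  exact h g (List.mem_singleton.mp hg).symm

lemma fib_qZmor : Fib (qZmor f) := by
  intro A B i ci wi
  have hinj : Function.Injective i.toFun := inj_of_cofib i ci
  apply hlp_of
  intro f' g' w
  classical
  have hw : ∀ a, qZg f (f'.toFun a) = g'.toFun (i.toFun a) :=
    fun a => congrFun (congrArg MonPresHom.toFun w) a
  let e : A.pres.Presented ≃* B.pres.Presented :=
    MulEquiv.ofBijective (MonPresHom.induced i) wi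
  let Θ : FreeMonoid B.pres.gen →* X.pres.Presented :=
    ((((θhatZ f).comp (MonPresHom.induced f')).comp
      (e.symm.toMonoidHom))).comp (Con.mk' B.pres.con)
  have hΘcon : ∀ {u v : FreeMonoid B.pres.gen}, B.pres.con u v → Θ u = Θ v :=
    fun {u v} huv => congrArg
      (⇑(((θhatZ f).comp (MonPresHom.induced f')).comp (e.symm.toMonoidHom)))
      ((Con.eq _).mpr huv)
  let mval : B.pres.gen → X.pres.Presented := fun b => Θ (FreeMonoid.of b)
  let tg : B.pres.gen → Gn X Y := fun b => (g'.toFun b, mval b)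
  let T : Set (Gn X Y) := Set.range tg
  let lg : B.pres.gen → AmbG X Y := fun b => Sum.inr (tg b)
  have hθlg : ∀ u : FreeMonoid B.pres.gen, θh (FreeMonoid.map lg u) = Θ u := by
    intro u
    have h : (θh (X := X) (Y := Y)).comp (FreeMonoid.map lg) = Θ :=
      FreeMonoid.hom_eq (fun b => rfl)
    exact congrFun (congrArg (fun (φ : _ →* _) => ⇑φ) h) u
  have hqlg : ∀ u : FreeMonoid B.pres.gen,
      qh f (FreeMonoid.map lg u) = FreeMonoid.map g'.toFun u := by
    intro u
    have h : (qh f).comp (FreeMonoid.map lg) = FreeMonoid.map g'.toFun :=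
      FreeMonoid.hom_eq (fun b => rfl)
    exact congrFun (congrArg (fun (φ : _ →* _) => ⇑φ) h) u
  -- transfer of congruences of B along lg
  have hBtrans : ∀ {u v : FreeMonoid B.pres.gen}, B.pres.con u v →
      cgr f (K f ∪ T) (FreeMonoid.map lg u) (FreeMonoid.map lg v) := by
    intro u v huv
    let c : Con (FreeMonoid B.pres.gen) :=
      { r := fun u v => cgr f (K f ∪ T) (FreeMonoid.map lg u) (FreeMonoid.map lg v)
        iseqv := ⟨fun _ => (cgr f _).refl _, fun h => (cgr f _).symm h,
          fun h1 h2 => (cgr f _).trans h1 h2⟩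
        mul' := by
          intro a b c' d h1 h2
          show cgr f (K f ∪ T) (FreeMonoid.map lg (a * c'))
            (FreeMonoid.map lg (b * d))
          rw [show FreeMonoid.map lg (a * c')
              = FreeMonoid.map lg a * FreeMonoid.map lg c' from map_mul _ _ _,
            show FreeMonoid.map lg (b * d)
              = FreeMonoid.map lg b * FreeMonoid.map lg d from map_mul _ _ _]
          exact (cgr f _).mul h1 h2 }
    have hle : B.pres.con ≤ c := by
      apply Con.conGen_le.mpr
      intro a b hab
      refine ConGen.Rel.of _ _ ?_
      refine ⟨?_, ?_, ?_, ?_⟩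
      · exact suppIn_map lg _ (fun c' g hg =>
          Or.inr ⟨c', Sum.inr.inj hg⟩) a
      · exact suppIn_map lg _ (fun c' g hg =>
          Or.inr ⟨c', Sum.inr.inj hg⟩) b
      · rw [hθlg, hθlg]
        exact hΘcon (ConGen.Rel.of _ _ hab)
      · rw [hqlg, hqlg]
        exact g'.map_rel (a, b) hab
    exact hle huv
  -- the key claim: all canonical pairs are good generators
  have hKmem : ∀ b : B.pres.gen, tg b ∈ K f := by
    have hTΦ : T ⊆ Φ f (K f) := by
      rintro t ⟨β, rfl⟩
      refine ⟨T, ⟨β, rfl⟩, ?_⟩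
      rintro t' ⟨β', rfl⟩
      obtain ⟨wA, hwA⟩ :=
        Con.mk'_surjective (e.symm (Con.mk' B.pres.con (FreeMonoid.of β')))
      have hBcon : B.pres.con (FreeMonoid.of β') (FreeMonoid.map i.toFun wA) := by
        apply (Con.eq _).mp
        have h2 : (MonPresHom.induced i) (Con.mk' A.pres.con wA)
            = Con.mk' B.pres.con (FreeMonoid.of β') := by
          rw [hwA]
          exact e.apply_symm_apply _
        rw [induced_mk'] at h2
        exact h2.symm
      have chain1 := hBtrans hBcon
      -- pointwise swap
      have hswap : ∀ a : A.pres.gen, cgr f (K f ∪ T)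
          (FreeMonoid.of (lg (i.toFun a)))
          (FreeMonoid.of (embZg f (f'.toFun a))) := by
        intro a
        refine ConGen.Rel.of _ _ ⟨?_, ?_, ?_, ?_⟩
        · exact suppIn_of _ _ (fun g hg => Or.inr ⟨i.toFun a, Sum.inr.inj hg⟩)
        · refine suppIn_of _ _ (fun g hg => ?_)
          cases hfa : f'.toFun a with
          | inl x => rw [hfa] at hg; exact absurd hg (by simp [embZg])
          | inr s =>
            rw [hfa] at hg
            exact Or.inl ((Sum.inr.inj hg) ▸ s.2)
        · -- θ component
          have hsymm : e.symm (Con.mk' B.pres.con (FreeMonoid.of (i.toFun a)))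
              = Con.mk' A.pres.con (FreeMonoid.of a) := by
            have h3 : Con.mk' B.pres.con (FreeMonoid.of (i.toFun a))
                = e (Con.mk' A.pres.con (FreeMonoid.of a)) := by
              show _ = (MonPresHom.induced i) (Con.mk' A.pres.con (FreeMonoid.of a))
              rw [induced_mk']
              rfl
            rw [h3, e.symm_apply_apply]
          calc θh (FreeMonoid.of (lg (i.toFun a)))
              = Θ (FreeMonoid.of (i.toFun a)) := rfl
            _ = (θhatZ f) ((MonPresHom.induced f')
                (e.symm (Con.mk' B.pres.con (FreeMonoid.of (i.toFun a))))) := rfl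
            _ = (θhatZ f) ((MonPresHom.induced f')
                (Con.mk' A.pres.con (FreeMonoid.of a))) := by rw [hsymm]
            _ = θZh f (FreeMonoid.map f'.toFun (FreeMonoid.of a)) := rfl
            _ = θZg f (f'.toFun a) := rfl
            _ = θg (embZg f (f'.toFun a)) := (θg_embZg f _).symm
            _ = θh (FreeMonoid.of (embZg f (f'.toFun a))) := rfl
        · -- q component
          show (qh f (FreeMonoid.of (lg (i.toFun a))),
            qh f (FreeMonoid.of (embZg f (f'.toFun a)))) ∈ Y.pres.rel
          have h4 : qg f (lg (i.toFun a)) = qg f (embZg f (f'.toFun a)) := by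
            exact (hw a).symm.trans (qg_embZg f _).symm
          rw [show qh f (FreeMonoid.of (lg (i.toFun a)))
              = FreeMonoid.of (qg f (lg (i.toFun a))) from rfl,
            show qh f (FreeMonoid.of (embZg f (f'.toFun a)))
              = FreeMonoid.of (qg f (embZg f (f'.toFun a))) from rfl, h4]
          exact Y.refl _
      have chain2 : cgr f (K f ∪ T)
          (FreeMonoid.map lg (FreeMonoid.map i.toFun wA))
          (FreeMonoid.map (embZg f) (FreeMonoid.map f'.toFun wA)) :=
        con_map_congr (cgr f (K f ∪ T))
          ((FreeMonoid.map lg).comp (FreeMonoid.map i.toFun))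
          ((FreeMonoid.map (embZg f)).comp (FreeMonoid.map f'.toFun))
          (fun a => hswap a) wA
      have chain3 : ∀ wZ : FreeMonoid (ZG f), ∃ wX : FreeMonoid X.pres.gen,
          cgr f (K f ∪ T) (FreeMonoid.map (embZg f) wZ) (eX wX) := by
        intro wZ
        induction wZ using FreeMonoid.recOn with
        | one =>
          refine ⟨1, ?_⟩
          rw [show FreeMonoid.map (embZg f) (1 : FreeMonoid (ZG f)) = 1 from map_one _,
            show eX (X := X) (Y := Y) (1 : FreeMonoid X.pres.gen) = 1 from map_one _]
          exact (cgr f _).refl 1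
        | of_mul z wZ ihw =>
          obtain ⟨wX2, h2⟩ := ihw
          cases z with
          | inl x =>
            refine ⟨FreeMonoid.of x * wX2, ?_⟩
            rw [show FreeMonoid.map (embZg f) (FreeMonoid.of (Sum.inl x) * wZ)
                = FreeMonoid.map (embZg f) (FreeMonoid.of (Sum.inl x))
                  * FreeMonoid.map (embZg f) wZ from map_mul _ _ _,
              show eX (X := X) (Y := Y) (FreeMonoid.of x * wX2)
                = eX (FreeMonoid.of x) * eX wX2 from map_mul _ _ _]
            exact (cgr f _).mul ((cgr f _).refl (FreeMonoid.of (Sum.inl x))) h2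
          | inr s =>
            have hs : s.1 ∈ Φ f (K f) := by rw [K_fixed f]; exact s.2
            obtain ⟨T', hsT', hT'⟩ := hs
            have hT'K : T' ⊆ K f := fun g' hg' => mem_K_of_Φ f ⟨T', hg', hT'⟩
            obtain ⟨wX1, _, hchain1⟩ := hT' s.1 hsT'
            rw [Set.union_eq_self_of_subset_right hT'K] at hchain1
            have hchain1' : cgr f (K f ∪ T)
                (FreeMonoid.of (Sum.inr s.1)) (eX wX1) :=
              cgr_mono f Set.subset_union_left hchain1
            refine ⟨wX1 * wX2, ?_⟩
            rw [show FreeMonoid.map (embZg f) (FreeMonoid.of (Sum.inr s) * wZ)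
                = FreeMonoid.map (embZg f) (FreeMonoid.of (Sum.inr s))
                  * FreeMonoid.map (embZg f) wZ from map_mul _ _ _,
              show eX (X := X) (Y := Y) (wX1 * wX2)
                = eX wX1 * eX wX2 from map_mul _ _ _]
            exact (cgr f _).mul hchain1' h2
      obtain ⟨wX, hchain3⟩ := chain3 (FreeMonoid.map f'.toFun wA)
      have total : cgr f (K f ∪ T)
          (FreeMonoid.of (Sum.inr (tg β'))) (eX wX) :=
        (cgr f _).trans chain1 ((cgr f _).trans chain2 hchain3)
      refine ⟨wX, ?_, total⟩
      have hv := cgr_theta f total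
      rw [θ_eX] at hv
      exact hv.symm
    exact fun b => mem_K_of_Φ f (hTΦ ⟨b, rfl⟩)
  -- now build the lift
  let lfun : B.pres.gen → ZG f := fun b =>
    if h : ∃ a, i.toFun a = b then f'.toFun h.choose
    else Sum.inr ⟨tg b, hKmem b⟩
  have hq1 : ∀ b, qZg f (lfun b) = g'.toFun b := by
    intro b
    by_cases h : ∃ a, i.toFun a = b
    · rw [show lfun b = f'.toFun h.choose from dif_pos h]
      rw [hw h.choose, h.choose_spec]
    · rw [show lfun b = Sum.inr ⟨tg b, hKmem b⟩ from dif_neg h]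
      rfl
  have hθ1 : ∀ b, θZg f (lfun b) = mval b := by
    intro b
    by_cases h : ∃ a, i.toFun a = b
    · rw [show lfun b = f'.toFun h.choose from dif_pos h]
      have hsymm : e.symm (Con.mk' B.pres.con (FreeMonoid.of b))
          = Con.mk' A.pres.con (FreeMonoid.of h.choose) := by
        have h3 : Con.mk' B.pres.con (FreeMonoid.of b)
            = e (Con.mk' A.pres.con (FreeMonoid.of h.choose)) := by
          show _ = (MonPresHom.induced i) (Con.mk' A.pres.con (FreeMonoid.of h.choose))
          rw [induced_mk']
          rw [show FreeMonoid.map i.toFun (FreeMonoid.of h.choose)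
            = FreeMonoid.of (i.toFun h.choose) from rfl, h.choose_spec]
        rw [h3, e.symm_apply_apply]
      calc θZg f (f'.toFun h.choose)
          = θZh f (FreeMonoid.map f'.toFun (FreeMonoid.of h.choose)) := rfl
        _ = (θhatZ f) ((MonPresHom.induced f')
            (Con.mk' A.pres.con (FreeMonoid.of h.choose))) := rfl
        _ = (θhatZ f) ((MonPresHom.induced f')
            (e.symm (Con.mk' B.pres.con (FreeMonoid.of b)))) := by rw [hsymm]
        _ = mval b := rfl
    · rw [show lfun b = Sum.inr ⟨tg b, hKmem b⟩ from dif_neg h]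
      rfl
  have hθword : ∀ u : FreeMonoid B.pres.gen,
      θZh f (FreeMonoid.map lfun u) = Θ u := by
    intro u
    have h : (θZh f).comp (FreeMonoid.map lfun) = Θ :=
      FreeMonoid.hom_eq (fun b => hθ1 b)
    exact congrFun (congrArg (fun (φ : _ →* _) => ⇑φ) h) u
  have hqword : ∀ u : FreeMonoid B.pres.gen,
      qZh f (FreeMonoid.map lfun u) = FreeMonoid.map g'.toFun u := by
    intro u
    have h : (qZh f).comp (FreeMonoid.map lfun) = FreeMonoid.map g'.toFun :=
      FreeMonoid.hom_eq (fun b => congrArg FreeMonoid.of (hq1 b))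
    exact congrFun (congrArg (fun (φ : _ →* _) => ⇑φ) h) u
  refine ⟨⟨lfun, ?_⟩, ?_, ?_⟩
  · rintro ⟨u, v⟩ huv
    constructor
    · show θZh f (FreeMonoid.map lfun u) = θZh f (FreeMonoid.map lfun v)
      rw [hθword, hθword]
      exact hΘcon (ConGen.Rel.of _ _ huv)
    · show (qZh f (FreeMonoid.map lfun u), qZh f (FreeMonoid.map lfun v))
        ∈ Y.pres.rel
      rw [hqword, hqword]
      exact g'.map_rel (u, v) huv
  · apply MonPresHom.ext'
    funext a
    show lfun (i.toFun a) = f'.toFun a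
    have h : ∃ a', i.toFun a' = i.toFun a := ⟨a, rfl⟩
    rw [show lfun (i.toFun a) = f'.toFun h.choose from dif_pos h]
    exact congrArg f'.toFun (hinj h.choose_spec)
  · exact MonPresHom.ext' (funext hq1)

end Fact2

end Fact2

/-- there is a model category structure on the category of
reflexive presentations with `Weq` as weak equivalences, `llp(rlp(I))` as
cofibrations and the morphisms with the right lifting property with respect
to trivial cofibrations as fibrations: the category is complete and
cocomplete, the weak equivalences satisfy 2-out-of-3, and
(cofibrations, trivial fibrations) and (trivial cofibrations, fibrations) are
weak factorization systems. -/
theorem stmt14 :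
    Limits.HasLimits RPres ∧ Limits.HasColimits RPres ∧
    (∀ ⦃X Y Z : RPres⦄ (f : X ⟶ Y) (g : Y ⟶ Z), Weq f → Weq g → Weq (f ≫ g)) ∧
    (∀ ⦃X Y Z : RPres⦄ (f : X ⟶ Y) (g : Y ⟶ Z), Weq g → Weq (f ≫ g) → Weq f) ∧
    (∀ ⦃X Y Z : RPres⦄ (f : X ⟶ Y) (g : Y ⟶ Z), Weq f → Weq (f ≫ g) → Weq g) ∧
    IsWFS Cofib (fun _ _ p => Fib p ∧ Weq p) ∧
    IsWFS (fun _ _ i => Cofib i ∧ Weq i) Fib := by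
  refine ⟨inferInstance, inferInstance,
    fun X Y Z f g hf hg => weq_comp f g hf hg,
    fun X Y Z f g hg hfg => weq_cancel_left f g hg hfg,
    fun X Y Z f g hf hfg => weq_cancel_right f g hf hfg, ?_, ?_⟩
  · constructor
    · intro A B X Y i p hi hp
      exact hi p (fibweq_rlpI p hp.1 hp.2)
    · intro A B i h
      intro X Y p hp
      exact h p ⟨fun A' B' i' ci' _ => ci' p hp,
        surjRefl_weq p ⟨rlpI_surj p hp, rlpI_refl p hp⟩⟩
    · intro X Y p h
      refine ⟨fun A' B' i ci _ => h i ci, ?_⟩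
      have hr : RlpI p := fun A B i hi => h i (iclass_cofib i hi)
      exact surjRefl_weq p ⟨rlpI_surj p hr, rlpI_refl p hr⟩
    · intro X Y f
      refine ⟨fact1Mid f, fact1i f, fact1q f, cofib_of_inj _ (fact1i_inj f),
        ⟨?_, ?_⟩, fact1_comp f⟩
      · intro A' B' i ci _
        exact ci (fact1q f) (rlpI_of_surjRefl _ (fact1q_surjRefl f))
      · exact surjRefl_weq _ (fact1q_surjRefl f)
  · constructor
    · intro A B X Y i p hi hp
      exact hp i hi.1 hi.2
    · intro A B i h
      obtain ⟨l, h1, h2⟩ := hlp_lift (h (Fact2.qZmor i) (Fact2.fib_qZmor i))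
        (Fact2.jZ i) (𝟙 B) (by rw [Fact2.fact2_comp, Category.comp_id])
      have hcomp : l.toFun ∘ i.toFun = (Fact2.jZ i).toFun :=
        congrArg MonPresHom.toFun h1
      have hinj : Function.Injective i.toFun := by
        intro a b hab
        have h3 : (Fact2.jZ i).toFun a = (Fact2.jZ i).toFun b := by
          rw [← congrFun hcomp a, ← congrFun hcomp b]
          exact congrArg l.toFun hab
        exact Fact2.jZ_inj i h3
      refine ⟨cofib_of_inj i hinj, ?_⟩
      have hj := Fact2.weq_jZ i
      have hcl : (MonPresHom.induced l).comp (MonPresHom.induced i)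
          = MonPresHom.induced (Fact2.jZ i) := by rw [← rpInduced_comp, h1]
      have hql : (MonPresHom.induced (Fact2.qZmor i)).comp (MonPresHom.induced l)
          = MonoidHom.id _ := by rw [← rpInduced_comp, h2, rpInduced_id]
      constructor
      · intro a b hab
        apply hj.injective
        rw [← hcl, MonoidHom.comp_apply, MonoidHom.comp_apply, hab]
      · intro b0
        obtain ⟨a0, ha0⟩ := hj.surjective ((MonPresHom.induced l) b0)
        refine ⟨a0, ?_⟩
        have hcq : (MonPresHom.induced (Fact2.qZmor i)).comp
            (MonPresHom.induced (Fact2.jZ i)) = MonPresHom.induced i := by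
          rw [← rpInduced_comp, Fact2.fact2_comp]
        calc (MonPresHom.induced i) a0
            = (MonPresHom.induced (Fact2.qZmor i))
              ((MonPresHom.induced (Fact2.jZ i)) a0) :=
              (congrFun (congrArg (fun (φ : _ →* _) => ⇑φ) hcq) a0).symm
          _ = (MonPresHom.induced (Fact2.qZmor i))
              ((MonPresHom.induced l) b0) := by rw [ha0]
          _ = b0 := congrFun (congrArg (fun (φ : _ →* _) => ⇑φ) hql) b0
    · intro X Y p h
      exact fun A B i ci wi => h i ⟨ci, wi⟩
    · intro X Y f
      exact ⟨Fact2.Zmid f, Fact2.jZ f, Fact2.qZmor f,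
        ⟨cofib_of_inj _ (Fact2.jZ_inj f), Fact2.weq_jZ f⟩,
        Fact2.fib_qZmor f, Fact2.fact2_comp f⟩
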